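/- Let a ∈ (−1, 1), m̂ ∈ ℝ, m = m̂/√(1−a²), Z̃ = (0,a) ∈ ℝ², and Z = (0, a, −1)/√(1−a²) ∈ H_S. Suppose q̃ = (x̃,ỹ) : I → D \ {Z̃} is a C² curve satisfying the planar Kepler equation d²q̃/dt² = −m · (‖q̃ − Z̃‖ₐ⁻)^{−3} · (q̃ − Z̃). Let τ ↦ t(τ) solve dt/dτ = 1 − x̃(t)² − ỹ(t)² and set q(τ) := π_H(q̃(t(τ))). Then for every τ, the Minkowski-tangential part of the second derivative satisfies q''(τ) + η(q''(τ), q(τ)) q(τ) = m̂ · (η(q(τ),Z)² − 1)^{−3/2} · (Z + η(q(τ),Z) q(τ)); i.e., the central projection carries solutions of the planar Kepler problem with norm ‖·‖ₐ⁻ and mass m = m̂/√(1−a²) to solutions of the hyperbolic Kepler problem with force function m̂ coth θ_Z. -/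

import Mathlib

set_option maxHeartbeats 1000000
noncomputable section

/-- The Minkowski form `η(u,v) = u₁v₁ + u₂v₂ - u₃v₃` on `ℝ³ = ℝ × ℝ × ℝ`. -/
def eta (u v : ℝ × ℝ × ℝ) : ℝ := u.1 * v.1 + u.2.1 * v.2.1 - u.2.2 * v.2.2

/-- The affine norm `‖(x,y)‖ₐ⁻ = √(x² + y²/(1-a²))` on the plane. -/
def normAm (a : ℝ) (p : ℝ × ℝ) : ℝ := Real.sqrt (p.1 ^ 2 + p.2 ^ 2 / (1 - a ^ 2))

/-- Central projection from the unit disc in the plane `{z = -1}` onto the lower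
sheet of the hyperboloid `η(q,q) = -1`. -/
def centralProjH (p : ℝ × ℝ) : ℝ × ℝ × ℝ :=
  (Real.sqrt (1 - p.1 ^ 2 - p.2 ^ 2))⁻¹ • (p.1, p.2, (-1 : ℝ))

namespace KeplerAux
variable (qt : ℝ → ℝ × ℝ) (t : ℝ → ℝ)
def X (τ : ℝ) : ℝ := (qt (t τ)).1
def Y (τ : ℝ) : ℝ := (qt (t τ)).2
def V1 (τ : ℝ) : ℝ := deriv (fun s => (qt s).1) (t τ)
def V2 (τ : ℝ) : ℝ := deriv (fun s => (qt s).2) (t τ)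
def A1 (τ : ℝ) : ℝ := deriv (deriv (fun s => (qt s).1)) (t τ)
def A2 (τ : ℝ) : ℝ := deriv (deriv (fun s => (qt s).2)) (t τ)
def W (τ : ℝ) : ℝ := 1 - X qt t τ ^ 2 - Y qt t τ ^ 2
def S (τ : ℝ) : ℝ := Real.sqrt (W qt t τ)
def D (τ : ℝ) : ℝ := X qt t τ * V1 qt t τ + Y qt t τ * V2 qt t τ
def E (τ : ℝ) : ℝ := V1 qt t τ ^ 2 + V2 qt t τ ^ 2
def F (τ : ℝ) : ℝ := X qt t τ * A1 qt t τ + Y qt t τ * A2 qt t τ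
def Q1 (τ : ℝ) : ℝ × ℝ × ℝ :=
  ((W qt t τ * V1 qt t τ + X qt t τ * D qt t τ) / S qt t τ,
   (W qt t τ * V2 qt t τ + Y qt t τ * D qt t τ) / S qt t τ,
   -D qt t τ / S qt t τ)
def Q2 (τ : ℝ) : ℝ × ℝ × ℝ :=
  ((W qt t τ ^ 2 * A1 qt t τ + W qt t τ * X qt t τ * E qt t τ
      + W qt t τ * X qt t τ * F qt t τ + X qt t τ * D qt t τ ^ 2) / S qt t τ,
   (W qt t τ ^ 2 * A2 qt t τ + W qt t τ * Y qt t τ * E qt t τ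
      + W qt t τ * Y qt t τ * F qt t τ + Y qt t τ * D qt t τ ^ 2) / S qt t τ,
   -(W qt t τ * E qt t τ + W qt t τ * F qt t τ + D qt t τ ^ 2) / S qt t τ)
end KeplerAux

theorem hasDerivAt_congr_deriv {α : Type*} [NormedAddCommGroup α] [NormedSpace ℝ α]
    {f : ℝ → α} {v v' : α} {x : ℝ} (h : HasDerivAt f v x) (hv : v = v') :
    HasDerivAt f v' x := hv ▸ h

open KeplerAux

/-- The central projection carries solutions of the planar Kepler problem with
norm `‖·‖ₐ⁻` and mass `m = m̂/√(1-a²)` to solutions of the hyperbolic Kepler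
problem with force function `m̂ coth θ_Z`. -/
theorem kepler_central_projection_hyperbolic
    (a : ℝ) (ha₁ : -1 < a) (ha₂ : a < 1)
    (mhat m : ℝ) (hm : m = mhat / Real.sqrt (1 - a ^ 2))
    (Zt : ℝ × ℝ) (hZt : Zt = (0, a))
    (Z : ℝ × ℝ × ℝ) (hZ : Z = (Real.sqrt (1 - a ^ 2))⁻¹ • ((0 : ℝ), a, (-1 : ℝ)))
    (qt : ℝ → ℝ × ℝ)
    (hdisc : ∀ s, (qt s).1 ^ 2 + (qt s).2 ^ 2 < 1)
    (hne : ∀ s, qt s ≠ Zt) (hC2 : ContDiff ℝ 2 qt)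
    (hODE : ∀ s, deriv (deriv qt) s
        = -(m / (normAm a (qt s - Zt)) ^ 3) • (qt s - Zt))
    (t : ℝ → ℝ)
    (ht : ∀ τ, HasDerivAt t (1 - (qt (t τ)).1 ^ 2 - (qt (t τ)).2 ^ 2) τ)
    (q : ℝ → ℝ × ℝ × ℝ) (hq : q = fun τ => centralProjH (qt (t τ))) :
    ∀ τ, deriv (deriv q) τ + eta (deriv (deriv q) τ) (q τ) • q τ
      = (mhat * (eta (q τ) Z ^ 2 - 1) ^ (-(3 : ℝ) / 2)) •
          (Z + eta (q τ) Z • q τ) := by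
  have ha : (0:ℝ) < 1 - a ^ 2 := by nlinarith
  have hs0 : 0 < Real.sqrt (1 - a ^ 2) := Real.sqrt_pos.mpr ha
  have hs2 : Real.sqrt (1 - a ^ 2) ^ 2 = 1 - a ^ 2 := Real.sq_sqrt ha.le
  have hmhat : mhat = m * Real.sqrt (1 - a ^ 2) := by
    rw [hm]; field_simp
  -- smoothness of components
  have hx : ContDiff ℝ 2 (fun s => (qt s).1) := (contDiff_fst.of_le le_top).comp hC2
  have hy : ContDiff ℝ 2 (fun s => (qt s).2) := (contDiff_snd.of_le le_top).comp hC2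
  have hxd : Differentiable ℝ (fun s => (qt s).1) := hx.differentiable (by norm_num)
  have hyd : Differentiable ℝ (fun s => (qt s).2) := hy.differentiable (by norm_num)
  have hx1 : Differentiable ℝ (deriv (fun s => (qt s).1)) := by
    have h2 : ContDiff ℝ (1+1) (fun s => (qt s).1) := by norm_num; exact hx
    exact ((contDiff_succ_iff_deriv.mp h2).2.2).differentiable one_ne_zero
  have hy1 : Differentiable ℝ (deriv (fun s => (qt s).2)) := by
    have h2 : ContDiff ℝ (1+1) (fun s => (qt s).2) := by norm_num; exact hy
    exact ((contDiff_succ_iff_deriv.mp h2).2.2).differentiable one_ne_zero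
  -- second derivative of qt componentwise
  have hqt1 : ∀ s, HasDerivAt qt (deriv (fun u => (qt u).1) s, deriv (fun u => (qt u).2) s) s :=
    fun s => ((hxd s).hasDerivAt.prodMk (hyd s).hasDerivAt)
  have hderivqt : deriv qt = fun s => (deriv (fun u => (qt u).1) s, deriv (fun u => (qt u).2) s) :=
    funext fun s => (hqt1 s).deriv
  have hqt2 : ∀ s, deriv (deriv qt) s
      = (deriv (deriv (fun u => (qt u).1)) s, deriv (deriv (fun u => (qt u).2)) s) := by
    intro s
    rw [hderivqt]
    exact ((hx1 s).hasDerivAt.prodMk (hy1 s).hasDerivAt).deriv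
  have hODE' : ∀ s, deriv (deriv (fun u => (qt u).1)) s
        = -(m / normAm a (qt s - Zt) ^ 3) * (qt s).1
      ∧ deriv (deriv (fun u => (qt u).2)) s
        = -(m / normAm a (qt s - Zt) ^ 3) * ((qt s).2 - a) := by
    intro s
    have h := hODE s
    rw [hqt2 s] at h
    constructor
    · have h1 := congrArg Prod.fst h
      simpa [hZt] using h1
    · have h1 := congrArg Prod.snd h
      simpa [hZt] using h1
  -- positivity facts
  have hWpos : ∀ τ, 0 < W qt t τ := fun τ => by
    have h := hdisc (t τ); unfold KeplerAux.W KeplerAux.X KeplerAux.Y; linarith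
  have hSpos : ∀ τ, 0 < S qt t τ := fun τ => Real.sqrt_pos.mpr (hWpos τ)
  have hSne : ∀ τ, S qt t τ ≠ 0 := fun τ => (hSpos τ).ne'
  have hWS : ∀ τ, W qt t τ = S qt t τ ^ 2 := fun τ => (Real.sq_sqrt (hWpos τ).le).symm
  have hrel : ∀ τ, S qt t τ ^ 2 = 1 - X qt t τ ^ 2 - Y qt t τ ^ 2 := fun τ => by
    rw [← hWS τ]; rfl
  have hNpos : ∀ s, 0 < normAm a (qt s - Zt) := by
    intro s
    have hne' := hne s
    have h1 : (qt s).1 ≠ 0 ∨ (qt s).2 - a ≠ 0 := by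
      by_contra hc
      push_neg at hc
      apply hne'
      rw [hZt]
      have : (qt s).2 = a := by linarith [hc.2]
      exact Prod.ext hc.1 this
    unfold normAm
    apply Real.sqrt_pos.mpr
    have hp1 : (qt s - Zt).1 = (qt s).1 := by rw [hZt]; simp
    have hp2 : (qt s - Zt).2 = (qt s).2 - a := by rw [hZt]; simp
    rw [hp1, hp2]
    rcases h1 with h | h
    · have h2 : 0 < (qt s).1 ^ 2 := by positivity
      have h3 : 0 ≤ ((qt s).2 - a) ^ 2 / (1 - a ^ 2) := by positivity
      linarith
    · have h2 : 0 < ((qt s).2 - a) ^ 2 / (1 - a ^ 2) := by positivity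
      have h3 : 0 ≤ (qt s).1 ^ 2 := sq_nonneg _
      linarith
  have hNne : ∀ s, normAm a (qt s - Zt) ≠ 0 := fun s => (hNpos s).ne'
  have hN2 : ∀ s, normAm a (qt s - Zt) ^ 2 = (qt s).1 ^ 2 + ((qt s).2 - a) ^ 2 / (1 - a ^ 2) := by
    intro s
    have hp1 : (qt s - Zt).1 = (qt s).1 := by rw [hZt]; simp
    have hp2 : (qt s - Zt).2 = (qt s).2 - a := by rw [hZt]; simp
    unfold normAm
    rw [hp1, hp2]
    apply Real.sq_sqrt
    positivity
  -- chain rule derivatives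
  have hXd : ∀ τ, HasDerivAt (X qt t) (W qt t τ * V1 qt t τ) τ := by
    intro τ
    have h1 : HasDerivAt (fun s => (qt s).1) (V1 qt t τ) (t τ) := (hxd (t τ)).hasDerivAt
    have h2 := h1.comp τ (ht τ)
    exact hasDerivAt_congr_deriv h2
      (by unfold KeplerAux.W KeplerAux.X KeplerAux.Y; ring)
  have hYd : ∀ τ, HasDerivAt (Y qt t) (W qt t τ * V2 qt t τ) τ := by
    intro τ
    have h1 : HasDerivAt (fun s => (qt s).2) (V2 qt t τ) (t τ) := (hyd (t τ)).hasDerivAt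
    have h2 := h1.comp τ (ht τ)
    exact hasDerivAt_congr_deriv h2
      (by unfold KeplerAux.W KeplerAux.X KeplerAux.Y; ring)
  have hV1d : ∀ τ, HasDerivAt (V1 qt t) (W qt t τ * A1 qt t τ) τ := by
    intro τ
    have h1 : HasDerivAt (deriv (fun s => (qt s).1)) (A1 qt t τ) (t τ) := (hx1 (t τ)).hasDerivAt
    have h2 := h1.comp τ (ht τ)
    exact hasDerivAt_congr_deriv h2
      (by unfold KeplerAux.W KeplerAux.X KeplerAux.Y; ring)
  have hV2d : ∀ τ, HasDerivAt (V2 qt t) (W qt t τ * A2 qt t τ) τ := by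
    intro τ
    have h1 : HasDerivAt (deriv (fun s => (qt s).2)) (A2 qt t τ) (t τ) := (hy1 (t τ)).hasDerivAt
    have h2 := h1.comp τ (ht τ)
    exact hasDerivAt_congr_deriv h2
      (by unfold KeplerAux.W KeplerAux.X KeplerAux.Y; ring)
  have hWd : ∀ τ, HasDerivAt (W qt t) (-2 * W qt t τ * D qt t τ) τ := by
    intro τ
    have h := ((hasDerivAt_const τ (1:ℝ)).sub ((hXd τ).pow 2)).sub ((hYd τ).pow 2)
    exact hasDerivAt_congr_deriv h (by unfold KeplerAux.D; push_cast; ring)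
  have hSd : ∀ τ, HasDerivAt (S qt t) (-(D qt t τ * S qt t τ)) τ := by
    intro τ
    have h := (hWd τ).sqrt (hWpos τ).ne'
    apply hasDerivAt_congr_deriv h
    have hsq : Real.sqrt (W qt t τ) = S qt t τ := rfl
    rw [hsq, hWS τ]
    field_simp [hSne τ]
  have hDd : ∀ τ, HasDerivAt (D qt t) (W qt t τ * (E qt t τ + F qt t τ)) τ := by
    intro τ
    have h := ((hXd τ).mul (hV1d τ)).add ((hYd τ).mul (hV2d τ))
    exact hasDerivAt_congr_deriv h (by unfold KeplerAux.E KeplerAux.F; ring)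
  -- q in explicit form
  have hqe : q = fun τ => ((S qt t τ)⁻¹ * X qt t τ, (S qt t τ)⁻¹ * Y qt t τ,
      (S qt t τ)⁻¹ * (-1 : ℝ)) := by
    rw [hq]
    funext τ
    simp only [centralProjH, Prod.smul_mk, smul_eq_mul]
    rfl
  have hSinv : ∀ τ, HasDerivAt (fun τ => (S qt t τ)⁻¹) (D qt t τ / S qt t τ) τ := by
    intro τ
    have h := (hSd τ).inv (hSne τ)
    apply hasDerivAt_congr_deriv h
    field_simp [hSne τ]
  have hq1 : ∀ τ, HasDerivAt q (Q1 qt t τ) τ := by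
    intro τ
    rw [hqe]
    have h1 := (hSinv τ).mul (hXd τ)
    have h2 := (hSinv τ).mul (hYd τ)
    have h3 := (hSinv τ).mul (hasDerivAt_const τ (-1:ℝ))
    apply hasDerivAt_congr_deriv (h1.prodMk (h2.prodMk h3))
    unfold KeplerAux.Q1
    refine Prod.ext ?_ (Prod.ext ?_ ?_)
    · show D qt t τ / S qt t τ * X qt t τ + (S qt t τ)⁻¹ * (W qt t τ * V1 qt t τ)
        = (W qt t τ * V1 qt t τ + X qt t τ * D qt t τ) / S qt t τ
      field_simp [hSne τ]; ring
    · show D qt t τ / S qt t τ * Y qt t τ + (S qt t τ)⁻¹ * (W qt t τ * V2 qt t τ)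
        = (W qt t τ * V2 qt t τ + Y qt t τ * D qt t τ) / S qt t τ
      field_simp [hSne τ]; ring
    · show D qt t τ / S qt t τ * (-1) + (S qt t τ)⁻¹ * 0 = -D qt t τ / S qt t τ
      field_simp [hSne τ]; ring
  have hderivq : deriv q = Q1 qt t := funext fun τ => (hq1 τ).deriv
  have hq2 : ∀ τ, HasDerivAt (Q1 qt t) (Q2 qt t τ) τ := by
    intro τ
    have n1 := (((hWd τ).mul (hV1d τ)).add ((hXd τ).mul (hDd τ))).div (hSd τ) (hSne τ)
    have n2 := (((hWd τ).mul (hV2d τ)).add ((hYd τ).mul (hDd τ))).div (hSd τ) (hSne τ)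
    have n3 := ((hDd τ).neg.div (hSd τ) (hSne τ))
    apply hasDerivAt_congr_deriv (n1.prodMk (n2.prodMk n3))
    unfold KeplerAux.Q2
    refine Prod.ext ?_ (Prod.ext ?_ ?_)
    · show ((-2 * W qt t τ * D qt t τ * V1 qt t τ + W qt t τ * (W qt t τ * A1 qt t τ)
          + (W qt t τ * V1 qt t τ * D qt t τ + X qt t τ * (W qt t τ * (E qt t τ + F qt t τ))))
            * S qt t τ
          - (W qt t τ * V1 qt t τ + X qt t τ * D qt t τ) * -(D qt t τ * S qt t τ))
            / S qt t τ ^ 2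
        = (W qt t τ ^ 2 * A1 qt t τ + W qt t τ * X qt t τ * E qt t τ
            + W qt t τ * X qt t τ * F qt t τ + X qt t τ * D qt t τ ^ 2) / S qt t τ
      field_simp [hSne τ]; ring
    · show ((-2 * W qt t τ * D qt t τ * V2 qt t τ + W qt t τ * (W qt t τ * A2 qt t τ)
          + (W qt t τ * V2 qt t τ * D qt t τ + Y qt t τ * (W qt t τ * (E qt t τ + F qt t τ))))
            * S qt t τ
          - (W qt t τ * V2 qt t τ + Y qt t τ * D qt t τ) * -(D qt t τ * S qt t τ))
            / S qt t τ ^ 2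
        = (W qt t τ ^ 2 * A2 qt t τ + W qt t τ * Y qt t τ * E qt t τ
            + W qt t τ * Y qt t τ * F qt t τ + Y qt t τ * D qt t τ ^ 2) / S qt t τ
      field_simp [hSne τ]; ring
    · show (-(W qt t τ * (E qt t τ + F qt t τ)) * S qt t τ
          - -D qt t τ * -(D qt t τ * S qt t τ)) / S qt t τ ^ 2
        = -(W qt t τ * E qt t τ + W qt t τ * F qt t τ + D qt t τ ^ 2) / S qt t τ
      field_simp [hSne τ]; ring
  have hderiv2 : ∀ τ, deriv (deriv q) τ = Q2 qt t τ := by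
    intro τ; rw [hderivq]; exact (hq2 τ).deriv
  -- final computation
  intro τ
  have hA1v : A1 qt t τ = -(m / normAm a (qt (t τ) - Zt) ^ 3) * X qt t τ := (hODE' (t τ)).1
  have hA2v : A2 qt t τ = -(m / normAm a (qt (t τ) - Zt) ^ 3) * (Y qt t τ - a) := (hODE' (t τ)).2
  have hN2' : normAm a (qt (t τ) - Zt) ^ 2 = X qt t τ ^ 2 + (Y qt t τ - a) ^ 2 / (1 - a ^ 2) :=
    hN2 (t τ)
  have hWX : (0:ℝ) < 1 - X qt t τ ^ 2 - Y qt t τ ^ 2 := hWpos τ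
  have heta : eta (q τ) Z = (a * Y qt t τ - 1) / (S qt t τ * Real.sqrt (1 - a ^ 2)) := by
    rw [hqe, hZ]
    simp only [eta, Prod.smul_mk, smul_eq_mul]
    field_simp [hSne τ]
    ring
  have hbase : eta (q τ) Z ^ 2 - 1 = (normAm a (qt (t τ) - Zt) / S qt t τ) ^ 2 := by
    rw [heta, div_pow, div_pow, mul_pow, hs2, hN2', hrel τ]
    field_simp [hWX.ne', ha.ne']
    ring
  have hepow : (eta (q τ) Z ^ 2 - 1) ^ (-(3:ℝ)/2)
      = S qt t τ ^ 3 / normAm a (qt (t τ) - Zt) ^ 3 := by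
    rw [hbase]
    have hx0 : (0:ℝ) ≤ normAm a (qt (t τ) - Zt) / S qt t τ :=
      div_nonneg (hNpos (t τ)).le (hSpos τ).le
    rw [← Real.rpow_natCast (normAm a (qt (t τ) - Zt) / S qt t τ) 2,
        ← Real.rpow_mul hx0]
    rw [show ((2:ℕ):ℝ) * (-(3:ℝ)/2) = -((3:ℕ):ℝ) by norm_num]
    rw [Real.rpow_neg hx0, Real.rpow_natCast, div_pow, inv_div]
  have heQ2 : eta (Q2 qt t τ) (q τ)
      = -(S qt t τ ^ 2 * E qt t τ + D qt t τ ^ 2) := by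
    rw [hqe]
    simp only [KeplerAux.Q2, eta, KeplerAux.E, KeplerAux.F, KeplerAux.D]
    rw [hWS τ]
    have hS' := hSne τ
    linear_combination (norm := (field_simp; ring1))
      ((S qt t τ ^ 2 * (V1 qt t τ ^ 2 + V2 qt t τ ^ 2)
          + S qt t τ ^ 2 * (X qt t τ * A1 qt t τ + Y qt t τ * A2 qt t τ)
          + (X qt t τ * V1 qt t τ + Y qt t τ * V2 qt t τ) ^ 2) / S qt t τ ^ 2)
        * hrel τ
  rw [hderiv2 τ, heQ2, hepow, heta, hmhat]
  simp only [hqe, hZ, KeplerAux.Q2, KeplerAux.F, KeplerAux.E, KeplerAux.D,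
    Prod.smul_mk, smul_eq_mul, Prod.mk_add_mk]
  rw [hWS τ, hA1v, hA2v]
  have hsplit : ∀ u v : ℝ × ℝ × ℝ, u.1 = v.1 → u.2.1 = v.2.1 → u.2.2 = v.2.2 → u = v := by
    intro u v h1 h2 h3
    exact Prod.ext h1 (Prod.ext h2 h3)
  apply hsplit
  · have hS' := hSne τ
    have hN' := hNne (t τ)
    have hsa' := hs0.ne'
    dsimp only
    linear_combination (norm := (field_simp; ring1))
      (-(m * S qt t τ * X qt t τ / normAm a (qt (t τ) - Zt) ^ 3)) * hrel τ
  · have hS' := hSne τ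
    have hN' := hNne (t τ)
    have hsa' := hs0.ne'
    dsimp only
    linear_combination (norm := (field_simp; ring1))
      (-(m * S qt t τ * Y qt t τ / normAm a (qt (t τ) - Zt) ^ 3)) * hrel τ
  · have hS' := hSne τ
    have hN' := hNne (t τ)
    have hsa' := hs0.ne'
    dsimp only
    linear_combination (norm := (field_simp; ring1))
      (m * S qt t τ / normAm a (qt (t τ) - Zt) ^ 3) * hrel τ
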